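/- Let X and Y be finite random variables with joint distribution P_XY, where P_X(x) > 0 for all x and P_Y(y) > 0 for all y, and let |𝒴| be the size of the alphabet of Y. Then for all δ ∈ (0,1), the PML envelope satisfies ε_c(δ) ≤ log(|𝒴|/δ). -/

import Mathlib

open Real Finset
open scoped Classical

noncomputable section

/-- Marginal distribution of the first coordinate of a joint distribution. -/
def margX {X Y : Type} [Fintype Y] (P : X → Y → ℝ) (x : X) : ℝ := ∑ y, P x y

/-- Marginal distribution of the second coordinate of a joint distribution. -/
def margY {X Y : Type} [Fintype X] (P : X → Y → ℝ) (y : Y) : ℝ := ∑ x, P x y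

/-- `P` is a joint probability distribution on `X × Y`. -/
def IsJoint {X Y : Type} [Fintype X] [Fintype Y] (P : X → Y → ℝ) : Prop :=
  (∀ x y, 0 ≤ P x y) ∧ (∑ x, ∑ y, P x y) = 1

/-- Conditional probability `P_{Y|X=x}(y)` of the second coordinate given the first. -/
def condYX {X Y : Type} [Fintype Y] (P : X → Y → ℝ) (x : X) (y : Y) : ℝ :=
  P x y / margX P x

/-- Pointwise maximal leakage of the outcome `y`:
`ℓ(X → y) = log (max_x P_{Y|X=x}(y) / P_Y(y))`. -/
def pml {X Y : Type} [Fintype X] [Fintype Y] (P : X → Y → ℝ) (y : Y) : ℝ :=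
  Real.log ((⨆ x, condYX P x y) / margY P y)

/-- `K` is a Markov kernel (a conditional distribution). -/
def IsKernel {Y Z : Type} [Fintype Z] (K : Y → Z → ℝ) : Prop :=
  (∀ y z, 0 ≤ K y z) ∧ ∀ y, (∑ z, K y z) = 1

/-- Joint distribution of `(X, Z)` obtained by post-processing `Y` with the kernel `K`
(marginalizing out `Y`); this encodes the Markov chain `X - Y - Z`. -/
def pushKernel {X Y Z : Type} [Fintype Y] (P : X → Y → ℝ) (K : Y → Z → ℝ)
    (x : X) (z : Z) : ℝ :=
  ∑ y, P x y * K y z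

/-- Left-continuous quantile of the leakage random variable:
`ubar ε_Z(δ) = inf {t ≥ 0 : ℙ(ℓ(Z) ≤ t) ≥ 1 - δ}`. -/
def ubarEps {X Z : Type} [Fintype X] [Fintype Z] (Q : X → Z → ℝ) (δ : ℝ) : ℝ :=
  sInf {t : ℝ | 0 ≤ t ∧
    1 - δ ≤ ∑ z ∈ Finset.univ.filter (fun z => pml Q z ≤ t), margY Q z}

/-- The PML envelope: the supremum of the left-continuous leakage quantile over all
finite post-processings `Z` of `Y` (i.e., over all Markov chains `X - Y - Z`). -/
def pmlEnvelope {X Y : Type} [Fintype X] [Fintype Y] (P : X → Y → ℝ) (δ : ℝ) : ℝ :=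
  sSup {e : ℝ | ∃ (n : ℕ) (K : Y → Fin n → ℝ),
    IsKernel K ∧ e = ubarEps (pushKernel P K) δ}

/-- For all `δ ∈ (0,1)`, the PML envelope satisfies
`ε_c(δ) ≤ log (|𝒴| / δ)`. -/
theorem pmlEnvelope_le_log_card
    {X Y : Type} [Fintype X] [Fintype Y]
    (P : X → Y → ℝ) (hP : IsJoint P)
    (hPX : ∀ x, 0 < margX P x) (hPY : ∀ y, 0 < margY P y)
    (δ : ℝ) (hδ : δ ∈ Set.Ioo (0 : ℝ) 1) :
    pmlEnvelope P δ ≤ Real.log ((Fintype.card Y : ℝ) / δ) := by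
  obtain ⟨hδ0, hδ1⟩ := hδ
  have hPnn := hP.1
  -- X and Y are nonempty
  have hXne : Nonempty X := by
    by_contra h
    rw [not_nonempty_iff] at h
    have := hP.2
    simp [Finset.univ_eq_empty] at this
  have hYne : Nonempty Y := by
    by_contra h
    rw [not_nonempty_iff] at h
    have := hP.2
    simp [Finset.univ_eq_empty] at this
  have hcardY : (1 : ℝ) ≤ (Fintype.card Y : ℝ) := by
    exact_mod_cast Fintype.card_pos
  set t₀ : ℝ := Real.log ((Fintype.card Y : ℝ) / δ) with ht₀def
  have hratio_pos : 0 < (Fintype.card Y : ℝ) / δ := by positivity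
  have ht₀ : 0 ≤ t₀ := Real.log_nonneg ((one_le_div hδ0).mpr (hδ1.le.trans hcardY))
  apply Real.sSup_le _ ht₀
  rintro e ⟨n, K, hK, rfl⟩
  set Q : X → Fin n → ℝ := pushKernel P K with hQdef
  have hQnn : ∀ x z, 0 ≤ Q x z := fun x z =>
    Finset.sum_nonneg fun y _ => mul_nonneg (hPnn x y) (hK.1 y z)
  have hmargXQ : ∀ x, margX Q x = margX P x := by
    intro x
    simp only [margX, hQdef, pushKernel]
    rw [Finset.sum_comm]
    simp [← Finset.mul_sum, hK.2]
  -- sup over x of conditional is ≤ 1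
  have hbddP : ∀ y : Y, BddAbove (Set.range fun x => condYX P x y) := fun y =>
    Set.Finite.bddAbove (Set.finite_range _)
  have hbddQ : ∀ z : Fin n, BddAbove (Set.range fun x => condYX Q x z) := fun z =>
    Set.Finite.bddAbove (Set.finite_range _)
  have hcond_nnP : ∀ x y, 0 ≤ condYX P x y := fun x y =>
    div_nonneg (hPnn x y) (hPX x).le
  have hsup_le1 : ∀ y : Y, (⨆ x, condYX P x y) ≤ 1 := by
    intro y
    refine ciSup_le fun x => ?_
    rw [condYX, div_le_one (hPX x)]
    exact Finset.single_le_sum (fun y' _ => hPnn x y') (Finset.mem_univ y)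
  -- sup of conditional for Q bounded by mixture of sups
  have hsupQ_le : ∀ z : Fin n,
      (⨆ x, condYX Q x z) ≤ ∑ y, (⨆ x, condYX P x y) * K y z := by
    intro z
    refine ciSup_le fun x => ?_
    have : condYX Q x z = ∑ y, condYX P x y * K y z := by
      simp only [condYX, hQdef, pushKernel, hmargXQ, Finset.sum_div]
      refine Finset.sum_congr rfl fun y _ => ?_
      rw [← hQdef, hmargXQ]
      ring
    rw [this]
    refine Finset.sum_le_sum fun y _ => ?_
    exact mul_le_mul_of_nonneg_right (le_ciSup (hbddP y) x) (hK.1 y z)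
  -- total sup mass ≤ card Y
  have hsum_sup : (∑ z, ⨆ x, condYX Q x z) ≤ (Fintype.card Y : ℝ) := by
    calc (∑ z, ⨆ x, condYX Q x z)
        ≤ ∑ z, ∑ y, (⨆ x, condYX P x y) * K y z :=
          Finset.sum_le_sum fun z _ => hsupQ_le z
      _ = ∑ y, (⨆ x, condYX P x y) := by
          rw [Finset.sum_comm]
          simp [← Finset.mul_sum, hK.2]
      _ ≤ ∑ _y : Y, (1 : ℝ) := Finset.sum_le_sum fun y _ => hsup_le1 y
      _ = (Fintype.card Y : ℝ) := by simp
  have hsupQ_nn : ∀ z : Fin n, 0 ≤ ⨆ x, condYX Q x z := fun z =>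
    le_ciSup_of_le (hbddQ z) (Classical.arbitrary X)
      (div_nonneg (hQnn _ z) ((hmargXQ _) ▸ (hPX _)).le)
  have hmargYQnn : ∀ z : Fin n, 0 ≤ margY Q z := fun z =>
    Finset.sum_nonneg fun x _ => hQnn x z
  -- total mass of Q is 1
  have htotal : (∑ z, margY Q z) = 1 := by
    simp only [margY, hQdef, pushKernel]
    rw [Finset.sum_comm]
    calc (∑ x, ∑ z, ∑ y, P x y * K y z)
        = ∑ x, ∑ y, P x y := by
          refine Finset.sum_congr rfl fun x _ => ?_
          rw [Finset.sum_comm]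
          simp [← Finset.mul_sum, hK.2]
      _ = 1 := hP.2
  -- bad z (pml > t₀) have small mass
  have hbad : ∀ z : Fin n, ¬ pml Q z ≤ t₀ →
      margY Q z ≤ (δ / (Fintype.card Y : ℝ)) * (⨆ x, condYX Q x z) := by
    intro z hz
    have hr_nn : 0 ≤ (⨆ x, condYX Q x z) / margY Q z :=
      div_nonneg (hsupQ_nn z) (hmargYQnn z)
    have hlog : t₀ < Real.log ((⨆ x, condYX Q x z) / margY Q z) := lt_of_not_ge hz
    have hr_gt : (Fintype.card Y : ℝ) / δ < (⨆ x, condYX Q x z) / margY Q z := by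
      by_contra hle
      push_neg at hle
      rcases hr_nn.lt_or_eq with hx | hx
      · have := Real.log_le_log hx hle
        rw [← ht₀def] at this
        linarith
      · rw [← hx, Real.log_zero] at hlog
        linarith
    have hm_pos : 0 < margY Q z := by
      rcases (hmargYQnn z).lt_or_eq with h | h
      · exact h
      · exfalso
        rw [← h] at hr_gt
        simp at hr_gt
        exact absurd hr_gt (not_lt.mpr hratio_pos.le)
    have hc_pos : 0 < (Fintype.card Y : ℝ) := lt_of_lt_of_le one_pos hcardY
    have h1 : (Fintype.card Y : ℝ) * margY Q z ≤ (⨆ x, condYX Q x z) * δ :=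
      ((div_lt_div_iff₀ hδ0 hm_pos).mp hr_gt).le
    rw [div_mul_eq_mul_div, le_div_iff₀ hc_pos]
    linarith
  -- mass of the bad set ≤ δ
  have hbadmass :
      (∑ z ∈ Finset.univ.filter (fun z => ¬ pml Q z ≤ t₀), margY Q z) ≤ δ := by
    have hc_pos : 0 < (Fintype.card Y : ℝ) := lt_of_lt_of_le one_pos hcardY
    calc (∑ z ∈ Finset.univ.filter (fun z => ¬ pml Q z ≤ t₀), margY Q z)
        ≤ ∑ z ∈ Finset.univ.filter (fun z => ¬ pml Q z ≤ t₀),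
            (δ / (Fintype.card Y : ℝ)) * (⨆ x, condYX Q x z) :=
          Finset.sum_le_sum fun z hz =>
            hbad z (by simpa using (Finset.mem_filter.mp hz).2)
      _ ≤ ∑ z, (δ / (Fintype.card Y : ℝ)) * (⨆ x, condYX Q x z) :=
          Finset.sum_le_sum_of_subset_of_nonneg (Finset.filter_subset _ _)
            fun z _ _ => mul_nonneg (by positivity) (hsupQ_nn z)
      _ = (δ / (Fintype.card Y : ℝ)) * ∑ z, (⨆ x, condYX Q x z) := by
          rw [Finset.mul_sum]
      _ ≤ (δ / (Fintype.card Y : ℝ)) * (Fintype.card Y : ℝ) :=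
          mul_le_mul_of_nonneg_left hsum_sup (by positivity)
      _ = δ := by field_simp
  -- hence t₀ is in the quantile set
  have hmem : t₀ ∈ {t : ℝ | 0 ≤ t ∧
      1 - δ ≤ ∑ z ∈ Finset.univ.filter (fun z => pml Q z ≤ t), margY Q z} := by
    refine ⟨ht₀, ?_⟩
    have hsplit := Finset.sum_filter_add_sum_filter_not Finset.univ
      (fun z => pml Q z ≤ t₀) (fun z => margY Q z)
    rw [htotal] at hsplit
    linarith
  exact csInf_le ⟨0, fun t ht => ht.1⟩ hmem
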